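/- The upper bound J_P = 1-p is achieved: for the two-element distributions x = (s+p, t) and y = (s, t+p) with s, t > 0 and s+t+p = 1, J_P(x,y) = 1-p, where p is their total variation distance. -/

import Mathlib

open Finset

open Classical in
/-- The probability Jaccard similarity of two nonnegative vectors. -/
noncomputable def JP {ι : Type*} [Fintype ι] (x y : ι → ℝ) : ℝ :=
  ∑ i ∈ Finset.univ.filter (fun i => 0 < x i ∧ 0 < y i),
    (∑ j, max (x j / x i) (y j / y i))⁻¹

/-- The upper bound `J_P = 1 - p` is achieved by the two-element distributions
`x = (s+p, t)` and `y = (s, t+p)`. -/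
theorem JP_upper_bound_achieved (s t p : ℝ) (hs : 0 < s) (ht : 0 < t) (hp : 0 ≤ p)
    (hsum : s + t + p = 1) :
    JP ![s + p, t] ![s, t + p] = 1 - p := by
  have hsp : 0 < s + p := by linarith
  have htp : 0 < t + p := by linarith
  unfold JP
  rw [Finset.filter_true_of_mem (by
    intro i _
    fin_cases i <;> simp [hs, ht, hsp, htp])]
  rw [Fin.sum_univ_two]
  simp only [Fin.sum_univ_two, Matrix.cons_val_zero, Matrix.cons_val_one, Matrix.head_cons]
  rw [div_self hsp.ne', div_self hs.ne', div_self ht.ne', div_self htp.ne']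
  have h1 : t / (s + p) ≤ (t + p) / s := by
    rw [div_le_div_iff₀ hsp hs]; nlinarith
  have h2 : s / (t + p) ≤ (s + p) / t := by
    rw [div_le_div_iff₀ htp ht]; nlinarith
  rw [max_eq_right h1, max_eq_left h2]
  field_simp
  simp only [max_self, one_mul]
  have e1 : s + p + t = 1 := by linarith
  have e2 : s + (t + p) = 1 := by linarith
  rw [e1, e2]
  ring_nf
  linarith
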